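/- For any two sequences of positive reals (μ_i) and (ν_i), if there exists a finite constant A ≥ 0 such that ∑_{i=1}^∞ μ_i (∑_{j=1}^i f_j)^2 ≤ A ∑_{i=1}^∞ ν_i f_i^2 for every real sequence (f_i), then B := sup_{k≥1} (∑_{j≥k} μ_j)(∑_{i=1}^k 1/ν_i) is finite and B ≤ A. -/

import Mathlib

/-- Discrete Hardy inequality (necessity direction): if the Hardy inequality holds
with a finite constant `A ≥ 0` for every real sequence `f`, then
`B := sup_{k≥1} (∑_{j≥k} μ_j)(∑_{i=1}^k 1/ν_i)` is finite and `B ≤ A`.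
Sequences are indexed by `ℕ`, where index `n` corresponds to the paper's `i = n+1`.
Sums are taken in `ℝ≥0∞`. -/
theorem stmt_1 (μ ν : ℕ → ℝ) (hμ : ∀ i, 0 < μ i) (hν : ∀ i, 0 < ν i)
    (A : ℝ) (hA : 0 ≤ A)
    (hHardy : ∀ f : ℕ → ℝ,
      ∑' i : ℕ, ENNReal.ofReal (μ i * (∑ j ∈ Finset.range (i + 1), f j) ^ 2) ≤
        ENNReal.ofReal A * ∑' i : ℕ, ENNReal.ofReal (ν i * f i ^ 2)) :
    ∀ k : ℕ,
      (∑' j : ℕ, ENNReal.ofReal (μ (k + j))) *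
        ENNReal.ofReal (∑ i ∈ Finset.range (k + 1), 1 / ν i) ≤ ENNReal.ofReal A := by
  intro k
  set S : ℝ := ∑ i ∈ Finset.range (k + 1), 1 / ν i with hS
  have hSpos : 0 < S :=
    Finset.sum_pos (fun i _ => one_div_pos.mpr (hν i)) ⟨0, Finset.mem_range.2 (Nat.succ_pos k)⟩
  set f : ℕ → ℝ := fun i => if i ≤ k then 1 / ν i else 0 with hf
  -- partial sums of f for i ≥ k equal S
  have hpart : ∀ i, k ≤ i → ∑ j ∈ Finset.range (i + 1), f j = S := by
    intro i hi
    have h1 : ∑ j ∈ Finset.range (i + 1), f j = ∑ j ∈ Finset.range (k + 1), f j := by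
      refine (Finset.sum_subset (Finset.range_subset_range.2 (by omega)) ?_).symm
      intro j hj hj'
      simp only [hf]
      rw [if_neg]
      have := Finset.mem_range.not.mp hj'
      omega
    rw [h1, hS]
    refine Finset.sum_congr rfl fun j hj => ?_
    have := Finset.mem_range.mp hj
    simp [hf, Nat.lt_succ_iff.mp this]
  -- the RHS of Hardy for this f
  have hRHS : (∑' i : ℕ, ENNReal.ofReal (ν i * f i ^ 2)) = ENNReal.ofReal S := by
    rw [tsum_eq_sum (s := Finset.range (k + 1)) ?_, hS,
      ENNReal.ofReal_sum_of_nonneg (fun i _ => (one_div_pos.mpr (hν i)).le)]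
    · refine Finset.sum_congr rfl fun i hi => ?_
      have hik := Nat.lt_succ_iff.mp (Finset.mem_range.mp hi)
      have hνi := (hν i).ne'
      congr 1
      simp only [hf, if_pos hik]
      field_simp
    · intro i hi
      have : ¬ i ≤ k := by
        have := Finset.mem_range.not.mp hi; omega
      simp [hf, this]
  -- lower bound of the LHS of Hardy for this f
  have hLHS : (∑' j : ℕ, ENNReal.ofReal (μ (k + j))) * ENNReal.ofReal (S ^ 2) ≤
      ∑' i : ℕ, ENNReal.ofReal (μ i * (∑ j ∈ Finset.range (i + 1), f j) ^ 2) := by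
    have hinj : Function.Injective (fun j : ℕ => k + j) := add_right_injective k
    calc (∑' j : ℕ, ENNReal.ofReal (μ (k + j))) * ENNReal.ofReal (S ^ 2)
        = ∑' j : ℕ, ENNReal.ofReal (μ (k + j) * (∑ m ∈ Finset.range ((k + j) + 1), f m) ^ 2) := by
          rw [← ENNReal.tsum_mul_right]
          refine tsum_congr fun j => ?_
          rw [hpart (k + j) (Nat.le_add_right k j),
            ← ENNReal.ofReal_mul (le_of_lt (hμ (k + j)))]
      _ ≤ ∑' i : ℕ, ENNReal.ofReal (μ i * (∑ j ∈ Finset.range (i + 1), f j) ^ 2) :=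
          ENNReal.tsum_comp_le_tsum_of_injective hinj
            (fun i => ENNReal.ofReal (μ i * (∑ j ∈ Finset.range (i + 1), f j) ^ 2))
  have key := le_trans hLHS (hHardy f)
  rw [hRHS] at key
  have hS0 : ENNReal.ofReal S ≠ 0 := by
    simp [ENNReal.ofReal_eq_zero, not_le, hSpos]
  have hStop : ENNReal.ofReal S ≠ ⊤ := ENNReal.ofReal_ne_top
  rw [sq, ENNReal.ofReal_mul hSpos.le, ← mul_assoc] at key
  exact (ENNReal.mul_le_mul_iff_left hS0 hStop).mp key
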